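/- Let X be an integer-valued random variable taking values in a lattice of step h (a positive integer), with variance σ² > 0, finite third absolute moment γ = E|X|³ > 0, H_h(X) > 0, and characteristic function φ(t) = E[e^{itX}]. Then for every positive integer n, ∫_{σ²/(4γ)}^{π/h} |φ(t)|ⁿ dt ≤ π^{5/2} γ / ( h² σ² n H_h(X) ). -/

import Mathlib

open MeasureTheory ProbabilityTheory

/-- Distance from a real number to the nearest integer. -/
noncomputable def distNearestInt (α : ℝ) : ℝ := |α - round α|

/-- `H(X,d) = E⟨X* d⟩²` where `X* = X - X'` is the symmetrisation of `X`; expressed via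
the law `ν` of `X` as a double integral. -/
noncomputable def Hsym (ν : Measure ℝ) (d : ℝ) : ℝ :=
  ∫ x, ∫ y, distNearestInt ((x - y) * d) ^ 2 ∂ν ∂ν

/-- `H_D(X) = inf_{1/(4D) ≤ d ≤ 1/(2D)} H(X,d)`. -/
noncomputable def HsymD (ν : Measure ℝ) (D : ℕ) : ℝ :=
  sInf (Hsym ν '' Set.Icc (1 / (4 * (D : ℝ))) (1 / (2 * (D : ℝ))))

lemma distNearestInt_nonneg (α : ℝ) : 0 ≤ distNearestInt α := abs_nonneg _

lemma distNearestInt_le_half (α : ℝ) : distNearestInt α ≤ 1/2 := by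
  simpa [distNearestInt] using abs_sub_round α

lemma measurable_distNearestInt : Measurable distNearestInt := by
  have : Measurable fun (α : ℝ) => ((round α : ℤ) : ℝ) := by
    have h1 : Measurable fun (α : ℝ) => (⌊α + 1/2⌋ : ℤ) :=
      Int.measurable_floor.comp (measurable_id.add_const _)
    have : Measurable fun (α : ℝ) => ((⌊α + 1/2⌋ : ℤ) : ℝ) :=
      (measurable_from_top (α := ℤ) (f := fun k : ℤ => (k : ℝ))).comp h1
    simpa [round_eq] using this
  exact (measurable_id.sub this).abs

lemma distNearestInt_two_mul (u : ℝ) : distNearestInt (2*u) ≤ 2 * distNearestInt u := by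
  have h := round_le (2*u) (2 * round u)
  calc distNearestInt (2*u) = |2*u - round (2*u)| := rfl
    _ ≤ |2*u - ((2 * round u : ℤ) : ℝ)| := h
    _ = 2 * |u - round u| := by
        push_cast
        rw [show (2*u - 2*(round u:ℝ)) = 2*(u - round u) by ring, abs_mul]
        norm_num
    _ = 2 * distNearestInt u := rfl

lemma distNearestInt_pow_mul (k : ℕ) (u : ℝ) :
    distNearestInt (2^k * u) ≤ 2^k * distNearestInt u := by
  induction k with
  | zero => simp
  | succ k ih =>
    have h2 := distNearestInt_two_mul (2^k * u)
    have : distNearestInt (2^(k+1) * u) ≤ 2 * distNearestInt (2^k * u) := by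
      rw [show (2:ℝ)^(k+1) * u = 2 * (2^k * u) by ring]; exact h2
    calc distNearestInt (2^(k+1) * u) ≤ 2 * distNearestInt (2^k * u) := this
      _ ≤ 2 * (2^k * distNearestInt u) := by linarith
      _ = 2^(k+1) * distNearestInt u := by ring

lemma four_sq_distNearestInt_le (u : ℝ) :
    4 * distNearestInt u ^ 2 ≤ Real.sin (Real.pi * u) ^ 2 := by
  set v := u - round u with hv
  have hb : |v| ≤ 1/2 := abs_sub_round u
  have hsin : Real.sin (Real.pi * u) ^ 2 = Real.sin (Real.pi * v) ^ 2 := by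
    have : Real.pi * u = Real.pi * v + round u * Real.pi := by rw [hv]; ring
    rw [this, Real.sin_add_int_mul_pi, ← sq_abs, abs_mul]
    have : |((-1 : ℝ)) ^ round u| = 1 := by
      rcases Int.even_or_odd (round u) with he | ho
      · rw [he.neg_one_zpow]; simp
      · rw [Odd.neg_one_zpow ho]; simp
    rw [this, one_mul, sq_abs]
  rw [hsin]
  have h1 : 2 * |v| ≤ |Real.sin (Real.pi * v)| := by
    rcases abs_cases v with ⟨h, _⟩ | ⟨h, _⟩
    · rw [h] at hb ⊢
      have := Real.mul_le_sin (x := Real.pi * v) (by positivity)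
        (by nlinarith [Real.pi_pos])
      calc 2 * v = 2/Real.pi * (Real.pi * v) := by field_simp
        _ ≤ Real.sin (Real.pi * v) := this
        _ ≤ |Real.sin (Real.pi * v)| := le_abs_self _
    · rw [h] at hb ⊢
      have hnv : 0 ≤ -v := by linarith [abs_nonneg v, h]
      have := Real.mul_le_sin (x := Real.pi * (-v)) (by positivity)
        (by nlinarith [Real.pi_pos])
      have hs : Real.sin (Real.pi * (-v)) = - Real.sin (Real.pi * v) := by
        rw [show Real.pi * (-v) = -(Real.pi * v) by ring, Real.sin_neg]
      calc 2 * (-v) = 2/Real.pi * (Real.pi * (-v)) := by field_simp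
        _ ≤ Real.sin (Real.pi * (-v)) := this
        _ = - Real.sin (Real.pi * v) := hs
        _ ≤ |Real.sin (Real.pi * v)| := neg_le_abs _
  have h2 : (2*|v|)^2 ≤ Real.sin (Real.pi*v)^2 := by
    nlinarith [h1, abs_nonneg (Real.sin (Real.pi * v)), sq_abs (Real.sin (Real.pi * v)), abs_nonneg v]
  have : (2*|v|)^2 = 4 * distNearestInt u ^2 := by
    rw [distNearestInt, ← hv]; rw [mul_pow, sq_abs]; ring
  linarith

lemma integrable_of_bdd {α : Type*} [MeasurableSpace α] {ν : Measure α} [IsFiniteMeasure ν]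
    {f : α → ℝ} (hf : AEStronglyMeasurable f ν) {C : ℝ} (hC : ∀ x, |f x| ≤ C) :
    Integrable f ν :=
  (integrable_const C).mono' hf (ae_of_all _ fun x => by simpa using hC x)

lemma measurable_dniKer (d : ℝ) :
    Measurable (fun p : ℝ × ℝ => distNearestInt ((p.1 - p.2) * d) ^ 2) :=
  ((measurable_distNearestInt.comp ((measurable_fst.sub measurable_snd).mul_const d)).pow_const 2)

lemma Hsym_nonneg (ν : Measure ℝ) (d : ℝ) : 0 ≤ Hsym ν d :=
  integral_nonneg fun _ => integral_nonneg fun _ => by positivity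

lemma Hsym_pow_le (ν : Measure ℝ) [IsProbabilityMeasure ν] (k : ℕ) (d : ℝ) :
    Hsym ν (2^k * d) ≤ 4^k * Hsym ν d := by
  have pt : ∀ x y : ℝ, distNearestInt ((x - y) * (2^k*d))^2
      ≤ 4^k * distNearestInt ((x - y) * d)^2 := by
    intro x y
    have h1 := distNearestInt_pow_mul k ((x-y)*d)
    have h0 := distNearestInt_nonneg ((x-y)*(2^k*d))
    have h0' := distNearestInt_nonneg ((x-y)*d)
    have he : (x - y) * (2^k*d) = 2^k * ((x-y)*d) := by ring
    rw [he]
    have hpow : ((4:ℝ))^k = ((2:ℝ)^k)^2 := by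
      rw [← pow_mul, mul_comm, pow_mul]; norm_num
    nlinarith [distNearestInt_nonneg (2^k * ((x-y)*d)), pow_pos (show (0:ℝ)<2 by norm_num) k]
  -- integrability of the bigger inner integrand
  have hinnerInt : ∀ x : ℝ, Integrable (fun y => (4:ℝ)^k * distNearestInt ((x - y) * d)^2) ν := by
    intro x
    refine integrable_of_bdd ?_ (C := 4^k * (1/4)) ?_
    · exact ((measurable_distNearestInt.comp
        ((measurable_const.sub measurable_id).mul_const d)).pow_const 2).const_mul _ |>.aestronglyMeasurable
    · intro y
      have h1 := distNearestInt_nonneg ((x - y) * d)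
      have h2 := distNearestInt_le_half ((x - y) * d)
      rw [abs_of_nonneg (by positivity)]
      have : distNearestInt ((x-y)*d)^2 ≤ 1/4 := by nlinarith
      nlinarith [pow_pos (show (0:ℝ)<4 by norm_num) k]
  have hinner : ∀ x : ℝ, (∫ y, distNearestInt ((x - y) * (2^k*d))^2 ∂ν)
      ≤ 4^k * ∫ y, distNearestInt ((x - y) * d)^2 ∂ν := by
    intro x
    rw [← integral_const_mul]
    exact integral_mono_of_nonneg (ae_of_all _ fun y => by positivity)
      (hinnerInt x) (ae_of_all _ fun y => pt x y)
  -- outer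
  have hGmeas : AEStronglyMeasurable (fun x => ∫ y, distNearestInt ((x - y) * d)^2 ∂ν) ν :=
    ((measurable_dniKer d).stronglyMeasurable.integral_prod_right').aestronglyMeasurable
  have hGint : Integrable (fun x => (4:ℝ)^k * ∫ y, distNearestInt ((x - y) * d)^2 ∂ν) ν := by
    refine integrable_of_bdd (hGmeas.const_mul _) (C := 4^k * (1/4)) ?_
    intro x
    have hb : |∫ y, distNearestInt ((x - y) * d)^2 ∂ν| ≤ 1/4 := by
      rw [abs_of_nonneg (integral_nonneg fun y => by positivity)]
      calc (∫ y, distNearestInt ((x - y) * d)^2 ∂ν) ≤ ∫ _, (1/4 : ℝ) ∂ν := by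
            refine integral_mono_of_nonneg (ae_of_all _ fun y => by positivity)
              (integrable_const _) (ae_of_all _ fun y => ?_)
            have h1 := distNearestInt_nonneg ((x - y) * d)
            have h2 := distNearestInt_le_half ((x - y) * d)
            nlinarith
        _ = 1/4 := by simp
    rw [abs_mul, abs_of_nonneg (by positivity : (0:ℝ) ≤ (4:ℝ)^k)]
    have : (0:ℝ) < 4^k := by positivity
    nlinarith
  calc Hsym ν (2^k*d) ≤ ∫ x, (4:ℝ)^k * ∫ y, distNearestInt ((x - y) * d)^2 ∂ν ∂ν := by
        refine integral_mono_of_nonneg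
          (ae_of_all _ fun x => integral_nonneg fun y => by positivity) hGint
          (ae_of_all _ fun x => hinner x)
    _ = 4^k * Hsym ν d := integral_const_mul _ _

lemma Hsym_lower (ν : Measure ℝ) [IsProbabilityMeasure ν] (h : ℕ) (hh : 0 < h)
    {d : ℝ} (hd : 0 < d) (hd2 : d ≤ 1/(2*h)) :
    4 * (h:ℝ)^2 * d^2 * HsymD ν h ≤ Hsym ν d := by
  have hhR : (0:ℝ) < h := by exact_mod_cast hh
  have hx : (1:ℝ) ≤ 1/(2*h*d) := by
    rw [le_div_iff₀ (by positivity)]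
    calc 1*(2*(h:ℝ)*d) = 2*h*d := by ring
      _ ≤ 2*h*(1/(2*h)) := by
          have := mul_le_mul_of_nonneg_left hd2 (show (0:ℝ) ≤ 2*h by positivity)
          linarith
      _ = 1 := by field_simp
  obtain ⟨k, hk1, hk2⟩ := exists_nat_pow_near hx (show (1:ℝ) < 2 by norm_num)
  have hp2 : (0:ℝ) < 2^k := by positivity
  have hupper : 2^k * d ≤ 1/(2*(h:ℝ)) := by
    rw [le_div_iff₀ (by positivity)]
    rw [le_div_iff₀ (by positivity)] at hk1
    nlinarith
  have hlower : 1/(4*(h:ℝ)) ≤ 2^k * d := by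
    rw [div_le_iff₀ (by positivity)]
    rw [div_lt_iff₀ (by positivity)] at hk2
    have : (2:ℝ)^(k+1) = 2 * 2^k := by ring
    nlinarith
  have hmem : Hsym ν (2^k * d) ∈ Hsym ν '' Set.Icc (1/(4*(h:ℝ))) (1/(2*(h:ℝ))) :=
    ⟨2^k * d, ⟨hlower, hupper⟩, rfl⟩
  have hbdd : BddBelow (Hsym ν '' Set.Icc (1/(4*(h:ℝ))) (1/(2*(h:ℝ)))) :=
    ⟨0, fun y ⟨e, _, he⟩ => he ▸ Hsym_nonneg ν e⟩
  have h1 : HsymD ν h ≤ Hsym ν (2^k * d) := csInf_le hbdd hmem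
  have h2 : Hsym ν (2^k * d) ≤ 4^k * Hsym ν d := Hsym_pow_le ν k d
  have h3 : HsymD ν h ≤ 4^k * Hsym ν d := h1.trans h2
  have hkd : (4:ℝ)^k * (4 * (h:ℝ)^2 * d^2) ≤ 1 := by
    rw [le_div_iff₀ (by positivity)] at hk1
    have h4 : ((4:ℝ))^k = ((2:ℝ)^k)^2 := by
      rw [← pow_mul, mul_comm, pow_mul]; norm_num
    have hA : (0:ℝ) ≤ 2^k*(2*(h:ℝ)*d) := by positivity
    have hsq : (2^k*(2*(h:ℝ)*d))^2 ≤ 1 := by nlinarith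
    calc (4:ℝ)^k * (4 * (h:ℝ)^2 * d^2) = (2^k*(2*(h:ℝ)*d))^2 := by rw [h4]; ring
      _ ≤ 1 := hsq
  have hHnn : 0 ≤ Hsym ν d := Hsym_nonneg ν d
  have hHDnn : 0 ≤ HsymD ν h := le_csInf ⟨_, hmem⟩ fun y ⟨e, _, he⟩ => he ▸ Hsym_nonneg ν e
  nlinarith [mul_le_mul_of_nonneg_left h3 (show (0:ℝ) ≤ 4*(h:ℝ)^2*d^2 by positivity)]

lemma integrable_of_bdd' {α : Type*} [MeasurableSpace α] {ν : Measure α} [IsFiniteMeasure ν]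
    {f : α → ℝ} (hf : AEStronglyMeasurable f ν) {C : ℝ} (hC : ∀ x, |f x| ≤ C) :
    Integrable f ν :=
  (integrable_const C).mono' hf (ae_of_all _ fun x => by simpa using hC x)

lemma charfun_sq_le (ν : Measure ℝ) [IsProbabilityMeasure ν] (t : ℝ) :
    ‖∫ x, Complex.exp (Complex.I * (t * x)) ∂ν‖ ^ 2
      ≤ 1 - 8 * Hsym ν (t / (2 * Real.pi)) := by
  set C := ∫ x, Real.cos (t * x) ∂ν with hC
  set S := ∫ x, Real.sin (t * x) ∂ν with hS
  have hcosm : ∀ s : ℝ, Measurable fun x : ℝ => Real.cos (s * x) :=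
    fun s => Real.measurable_cos.comp (measurable_const.mul measurable_id)
  have hsinm : ∀ s : ℝ, Measurable fun x : ℝ => Real.sin (s * x) :=
    fun s => Real.measurable_sin.comp (measurable_const.mul measurable_id)
  have hcosint : ∀ s : ℝ, Integrable (fun x : ℝ => Real.cos (s * x)) ν := fun s =>
    integrable_of_bdd' (hcosm s).aestronglyMeasurable (C := 1) fun x => Real.abs_cos_le_one _
  have hsinint : ∀ s : ℝ, Integrable (fun x : ℝ => Real.sin (s * x)) ν := fun s =>
    integrable_of_bdd' (hsinm s).aestronglyMeasurable (C := 1) fun x => Real.abs_sin_le_one _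
  -- identify the integral
  have hz : (∫ x, Complex.exp (Complex.I * (t * x)) ∂ν) = (C : ℂ) + (S : ℂ) * Complex.I := by
    have hpt : ∀ x : ℝ, Complex.exp (Complex.I * (t * x))
        = ((Real.cos (t*x) : ℝ) : ℂ) + ((Real.sin (t*x) : ℝ) : ℂ) * Complex.I := by
      intro x
      rw [mul_comm, Complex.exp_mul_I]
      norm_cast
    have hfint : Integrable (fun x : ℝ => Complex.exp (Complex.I * (t * x))) ν := by
      refine (integrable_const (1:ℝ)).mono' ?_ (ae_of_all _ fun x => ?_)
      · exact Measurable.aestronglyMeasurable (by fun_prop)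
      · rw [Complex.norm_exp]
        simp
    apply Complex.ext
    · have h1 := integral_re hfint
      simp only [RCLike.re_to_complex] at h1
      rw [← h1]
      have hre : ∀ x:ℝ, (Complex.exp (Complex.I * (t * x))).re = Real.cos (t*x) := fun x => by
        rw [hpt x]; simp [← Complex.ofReal_mul, Complex.cos_ofReal_re, Complex.sin_ofReal_re]
      simp_rw [hre]
      simp [hC]
    · have h1 := integral_im hfint
      simp only [RCLike.im_to_complex] at h1
      rw [← h1]
      have him : ∀ x:ℝ, (Complex.exp (Complex.I * (t * x))).im = Real.sin (t*x) := fun x => by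
        rw [hpt x]; simp [← Complex.ofReal_mul, Complex.cos_ofReal_re, Complex.sin_ofReal_re]
      simp_rw [him]
      simp [hS]
  rw [hz]
  have habs : ‖(C : ℂ) + (S : ℂ) * Complex.I‖ ^ 2 = C^2 + S^2 := by
    rw [Complex.sq_norm, Complex.normSq_apply]
    simp
    ring
  rw [habs]
  -- double integral representation
  have hinner : ∀ x : ℝ, (∫ y, Real.cos (t * (x - y)) ∂ν)
      = Real.cos (t*x) * C + Real.sin (t*x) * S := by
    intro x
    have : ∀ y : ℝ, Real.cos (t * (x - y))
        = Real.cos (t*x) * Real.cos (t*y) + Real.sin (t*x) * Real.sin (t*y) := by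
      intro y
      rw [show t * (x - y) = t*x - t*y by ring, Real.cos_sub]
    simp_rw [this]
    rw [integral_add ((hcosint t).const_mul _) ((hsinint t).const_mul _),
      integral_const_mul, integral_const_mul]
  -- pointwise bound
  have hpt2 : ∀ x y : ℝ, Real.cos (t * (x - y))
      ≤ 1 - 8 * distNearestInt ((x - y) * (t / (2*Real.pi))) ^ 2 := by
    intro x y
    set u := (x - y) * (t / (2*Real.pi)) with hu
    have hpi := Real.pi_ne_zero
    have harg : t * (x - y) = 2 * (Real.pi * u) := by
      rw [hu]; field_simp
    have hcos2 : Real.cos (t * (x - y)) = 1 - 2 * Real.sin (Real.pi * u) ^ 2 := by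
      rw [harg, Real.cos_two_mul]
      have := Real.sin_sq_add_cos_sq (Real.pi * u)
      nlinarith
    rw [hcos2]
    have := four_sq_distNearestInt_le u
    linarith
  -- (fun x => inner cos integral) is bounded measurable
  have hker : Measurable fun p : ℝ × ℝ => Real.cos (t * (p.1 - p.2)) :=
    Real.measurable_cos.comp (measurable_const.mul (measurable_fst.sub measurable_snd))
  have hG : AEStronglyMeasurable
      (fun x => ∫ y, distNearestInt ((x - y) * (t / (2*Real.pi))) ^ 2 ∂ν) ν :=
    (((measurable_distNearestInt.comp
      ((measurable_fst.sub measurable_snd).mul_const _)).pow_const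
        2).stronglyMeasurable.integral_prod_right').aestronglyMeasurable
  have hgint : ∀ x : ℝ, Integrable
      (fun y => distNearestInt ((x - y) * (t / (2*Real.pi))) ^ 2) ν := by
    intro x
    refine integrable_of_bdd' ((measurable_distNearestInt.comp
      ((measurable_const.sub measurable_id).mul_const _)).pow_const 2).aestronglyMeasurable
      (C := 1/4) fun y => ?_
    have h1 := distNearestInt_nonneg ((x - y) * (t / (2*Real.pi)))
    have h2 := distNearestInt_le_half ((x - y) * (t / (2*Real.pi)))
    rw [abs_of_nonneg (by positivity)]
    nlinarith
  have hdint : ∀ x : ℝ, Integrable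
      (fun y => 1 - 8 * distNearestInt ((x - y) * (t / (2*Real.pi))) ^ 2) ν :=
    fun x => (integrable_const 1).sub ((hgint x).const_mul 8)
  have hinner_le : ∀ x : ℝ, (∫ y, Real.cos (t * (x - y)) ∂ν)
      ≤ 1 - 8 * ∫ y, distNearestInt ((x - y) * (t / (2*Real.pi))) ^ 2 ∂ν := by
    intro x
    have hci : Integrable (fun y => Real.cos (t * (x - y))) ν :=
      integrable_of_bdd' (Real.measurable_cos.comp
        (measurable_const.mul (measurable_const.sub measurable_id))).aestronglyMeasurable
        (C := 1) fun y => Real.abs_cos_le_one _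
    calc (∫ y, Real.cos (t * (x - y)) ∂ν)
        ≤ ∫ y, (1 - 8 * distNearestInt ((x - y) * (t / (2*Real.pi))) ^ 2) ∂ν :=
          integral_mono hci (hdint x) fun y => hpt2 x y
      _ = 1 - 8 * ∫ y, distNearestInt ((x - y) * (t / (2*Real.pi))) ^ 2 ∂ν := by
          rw [integral_sub (integrable_const 1) ((hgint x).const_mul 8), integral_const_mul]
          simp
  -- outer comparison
  have houter_meas : AEStronglyMeasurable (fun x => ∫ y, Real.cos (t * (x - y)) ∂ν) ν :=
    (hker.stronglyMeasurable.integral_prod_right').aestronglyMeasurable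
  have houter_int : Integrable (fun x => ∫ y, Real.cos (t * (x - y)) ∂ν) ν := by
    refine integrable_of_bdd' houter_meas (C := 1) fun x => ?_
    have := norm_integral_le_of_norm_le_const (μ := ν)
      (f := fun y => Real.cos (t * (x - y))) (C := 1)
      (ae_of_all _ fun y => by rw [Real.norm_eq_abs]; exact Real.abs_cos_le_one _)
    simpa using this
  have hrhs_int : Integrable
      (fun x => 1 - 8 * ∫ y, distNearestInt ((x - y) * (t / (2*Real.pi))) ^ 2 ∂ν) ν := by
    refine integrable_of_bdd' (aestronglyMeasurable_const.sub (hG.const_mul 8)) (C := 3) fun x => ?_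
    have hb : |∫ y, distNearestInt ((x - y) * (t / (2*Real.pi))) ^ 2 ∂ν| ≤ 1/4 := by
      have := norm_integral_le_of_norm_le_const (μ := ν)
        (f := fun y => distNearestInt ((x - y) * (t / (2*Real.pi))) ^ 2) (C := 1/4)
        (ae_of_all _ fun y => by
          have h1 := distNearestInt_nonneg ((x - y) * (t / (2*Real.pi)))
          have h2 := distNearestInt_le_half ((x - y) * (t / (2*Real.pi)))
          rw [Real.norm_eq_abs, abs_of_nonneg (by positivity)]
          nlinarith)
      simpa using this
    rw [abs_le] at hb ⊢
    constructor <;> nlinarith [hb.1, hb.2]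
  have key : (∫ x, ∫ y, Real.cos (t * (x - y)) ∂ν ∂ν)
      ≤ 1 - 8 * Hsym ν (t / (2*Real.pi)) := by
    calc (∫ x, ∫ y, Real.cos (t * (x - y)) ∂ν ∂ν)
        ≤ ∫ x, (1 - 8 * ∫ y, distNearestInt ((x - y) * (t / (2*Real.pi))) ^ 2 ∂ν) ∂ν :=
          integral_mono houter_int hrhs_int fun x => hinner_le x
      _ = 1 - 8 * Hsym ν (t / (2*Real.pi)) := by
          have hI : Integrable
              (fun x => ∫ y, distNearestInt ((x - y) * (t / (2*Real.pi))) ^ 2 ∂ν) ν := by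
            refine integrable_of_bdd' hG (C := 1/4) fun x => ?_
            have := norm_integral_le_of_norm_le_const (μ := ν)
              (f := fun y => distNearestInt ((x - y) * (t / (2*Real.pi))) ^ 2) (C := 1/4)
              (ae_of_all _ fun y => by
                have h1 := distNearestInt_nonneg ((x - y) * (t / (2*Real.pi)))
                have h2 := distNearestInt_le_half ((x - y) * (t / (2*Real.pi)))
                rw [Real.norm_eq_abs, abs_of_nonneg (by positivity)]
                nlinarith)
            simpa using this
          rw [integral_sub (integrable_const 1) (Integrable.const_mul hI 8)]
          · rw [integral_const_mul]; simp [Hsym]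
  -- C^2 + S^2 equals double integral
  have hCS : C^2 + S^2 = ∫ x, ∫ y, Real.cos (t * (x - y)) ∂ν ∂ν := by
    simp_rw [hinner]
    rw [integral_add ((hcosint t).mul_const _) ((hsinint t).mul_const _),
      integral_mul_const, integral_mul_const, ← hC, ← hS]
    ring
  rw [hCS] at *
  exact key

set_option maxHeartbeats 1000000 in
/-- For a lattice random variable `X` of step `h` with variance `σ² > 0`, third absolute
moment `γ > 0` and `H_h(X) > 0`, the characteristic function `φ` satisfies
`∫_{σ²/(4γ)}^{π/h} |φ(t)|ⁿ dt ≤ π^{5/2} γ / (h² σ² n H_h(X))` for all `n ≥ 1`. -/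
theorem char_fun_integral_bound
    {Ω : Type*} [MeasurableSpace Ω] {μ : Measure Ω} [IsProbabilityMeasure μ]
    (X : Ω → ℝ) (hX : Measurable X)
    (h : ℕ) (hh : 0 < h) (b : ℤ)
    (hlattice : ∀ᵐ ω ∂μ, ∃ k : ℤ, X ω = (b : ℝ) + (h : ℝ) * k)
    (σ γ : ℝ) (hσpos : 0 < σ) (hσ : σ ^ 2 = variance X μ)
    (hγint : Integrable (fun ω => |X ω| ^ 3) μ)
    (hγ : γ = ∫ ω, |X ω| ^ 3 ∂μ) (hγpos : 0 < γ)
    (hH : 0 < HsymD (μ.map X) h)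
    (n : ℕ) (hn : 0 < n) :
    (∫ t in (σ ^ 2 / (4 * γ))..(Real.pi / h),
        ‖∫ ω, Complex.exp (Complex.I * (t * X ω)) ∂μ‖ ^ n) ≤
      Real.pi ^ ((5 : ℝ) / 2) * γ / (h ^ 2 * σ ^ 2 * n * HsymD (μ.map X) h) := by
  have hπ := Real.pi_pos
  have hhR : (0:ℝ) < h := by exact_mod_cast hh
  have hnR : (0:ℝ) < n := by exact_mod_cast hn
  obtain ⟨H, hHdef⟩ : ∃ H', HsymD (μ.map X) h = H' := ⟨_, rfl⟩
  rw [hHdef] at hH ⊢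
  set a := σ ^ 2 / (4 * γ) with ha
  set B := Real.pi / h with hB
  have hapos : 0 < a := by rw [ha]; positivity
  clear_value a B
  have hRHSpos : 0 < Real.pi ^ ((5 : ℝ) / 2) * γ / (h ^ 2 * σ ^ 2 * n * H) := by
    apply div_pos (mul_pos (Real.rpow_pos_of_pos hπ _) hγpos)
    positivity
  by_cases hab : a ≤ B
  swap
  · have : (∫ t in a..B,
        ‖∫ ω, Complex.exp (Complex.I * (t * X ω)) ∂μ‖ ^ n) ≤ 0 := by
      rw [intervalIntegral.integral_symm]
      simp only [neg_nonpos]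
      exact intervalIntegral.integral_nonneg (le_of_not_ge hab)
        (fun u _ => by positivity)
    linarith
  -- main case
  haveI : IsProbabilityMeasure (μ.map X) := Measure.isProbabilityMeasure_map hX.aemeasurable
  have hmap : ∀ t : ℝ, (∫ ω, Complex.exp (Complex.I * (t * X ω)) ∂μ)
      = ∫ x, Complex.exp (Complex.I * (t * x)) ∂(μ.map X) := by
    intro t
    rw [integral_map hX.aemeasurable (Measurable.aestronglyMeasurable (by fun_prop))]
  set l := (n:ℝ) * ((h:ℝ)^2 * H * a * 4 / Real.pi^2) with hl
  clear_value l
  have hlpos : 0 < l := by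
    rw [hl]; positivity
  -- pointwise bound
  have hptw : ∀ t ∈ Set.Icc a B,
      ‖∫ ω, Complex.exp (Complex.I * (t * X ω)) ∂μ‖ ^ n
        ≤ Real.exp (-(l * t)) := by
    intro t ht
    obtain ⟨hta, htB⟩ := ht
    have ht0 : 0 < t := lt_of_lt_of_le hapos hta
    set d := t / (2 * Real.pi) with hd
    have hd0 : 0 < d := by rw [hd]; positivity
    clear_value d
    have hd2 : d ≤ 1 / (2 * (h:ℝ)) := by
      rw [hd, div_le_div_iff₀ (by positivity) (by positivity)]
      rw [hB, le_div_iff₀ hhR] at htB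
      nlinarith
    have q1 := charfun_sq_le (μ.map X) t
    have q2 := Hsym_lower (μ.map X) h hh hd0 hd2
    rw [hHdef] at q2
    set A := ‖∫ x, Complex.exp (Complex.I * (t * x)) ∂(μ.map X)‖ with hA
    have hA0 : 0 ≤ A := norm_nonneg _
    clear_value A
    have e1 : A ^ 2 ≤ Real.exp (-(32 * (h:ℝ)^2 * d^2 * H)) := by
      have := Real.add_one_le_exp (-(32 * (h:ℝ)^2 * d^2 * H))
      have hq : A^2 ≤ 1 - 32 * (h:ℝ)^2 * d^2 * H := by
        rw [← hd] at q1
        nlinarith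
      linarith
    have e2 : A ≤ Real.exp (-(16 * (h:ℝ)^2 * d^2 * H)) := by
      have hexp : Real.exp (-(16 * (h:ℝ)^2 * d^2 * H)) ^ 2
          = Real.exp (-(32 * (h:ℝ)^2 * d^2 * H)) := by
        rw [sq, ← Real.exp_add]; ring_nf
      nlinarith [Real.exp_pos (-(16 * (h:ℝ)^2 * d^2 * H))]
    have e3 : A ^ n ≤ Real.exp (-(16 * (h:ℝ)^2 * d^2 * H)) ^ n :=
      pow_le_pow_left₀ hA0 e2 n
    have e4 : Real.exp (-(16 * (h:ℝ)^2 * d^2 * H)) ^ n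
        = Real.exp ((n:ℝ) * (-(16 * (h:ℝ)^2 * d^2 * H))) := by
      rw [← Real.exp_nat_mul]
    have e5 : (n:ℝ) * (-(16 * (h:ℝ)^2 * d^2 * H)) ≤ -(l * t) := by
      have hdt : d^2 = t^2 / (4 * Real.pi^2) := by
        rw [hd]; field_simp; ring
      have hta' : a * t ≤ t^2 := by nlinarith
      rw [hdt, hl]
      have hc : 0 ≤ (n:ℝ) * (4 * (h:ℝ)^2 * H / Real.pi^2) := by positivity
      have expand1 : (n:ℝ) * (-(16 * (h:ℝ)^2 * (t^2 / (4*Real.pi^2)) * H))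
          = -((n:ℝ) * (4 * (h:ℝ)^2 * H / Real.pi^2) * t^2) := by field_simp; ring
      have expand2 : -((n:ℝ) * ((h:ℝ)^2 * H * a * 4 / Real.pi^2) * t)
          = -((n:ℝ) * (4 * (h:ℝ)^2 * H / Real.pi^2) * (a*t)) := by field_simp
      rw [expand1, expand2]
      have := mul_le_mul_of_nonneg_left hta' hc
      linarith
    calc ‖∫ ω, Complex.exp (Complex.I * (t * X ω)) ∂μ‖ ^ n
        = A ^ n := by rw [hA, hmap t]
      _ ≤ Real.exp (-(16 * (h:ℝ)^2 * d^2 * H)) ^ n := e3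
      _ = Real.exp ((n:ℝ) * (-(16 * (h:ℝ)^2 * d^2 * H))) := e4
      _ ≤ Real.exp (-(l * t)) := Real.exp_le_exp.mpr e5
  -- continuity of the integrand in t
  have hcont : Continuous fun t : ℝ =>
      ‖∫ ω, Complex.exp (Complex.I * (t * X ω)) ∂μ‖ ^ n := by
    have hc0 : Continuous fun t : ℝ => ∫ ω, Complex.exp (Complex.I * (t * X ω)) ∂μ := by
      refine continuous_of_dominated (fun t => Measurable.aestronglyMeasurable (by fun_prop))
        (fun t => ae_of_all _ fun ω => ?_) (integrable_const 1)
        (ae_of_all _ fun ω => by fun_prop)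
      rw [Complex.norm_exp]
      simp
    exact (continuous_norm.comp hc0).pow n
  have hint1 : IntervalIntegrable (fun t : ℝ =>
      ‖∫ ω, Complex.exp (Complex.I * (t * X ω)) ∂μ‖ ^ n) volume a B :=
    hcont.intervalIntegrable a B
  have hint2 : IntervalIntegrable (fun t : ℝ => Real.exp (-(l * t))) volume a B :=
    (Real.continuous_exp.comp (continuous_const.mul continuous_id).neg).intervalIntegrable a B
  have step1 : (∫ t in a..B,
        ‖∫ ω, Complex.exp (Complex.I * (t * X ω)) ∂μ‖ ^ n)
      ≤ ∫ t in a..B, Real.exp (-(l * t)) :=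
    intervalIntegral.integral_mono_on hab hint1 hint2 fun t ht => hptw t ht
  -- compute exponential integral
  have hderiv : ∀ t : ℝ, HasDerivAt (fun u => -(Real.exp (-(l*u)))/l)
      (Real.exp (-(l*t))) t := by
    intro t
    have h1 : HasDerivAt (fun u : ℝ => -(l*u)) (-l) t := by
      simpa using (hasDerivAt_id t).const_mul (-l)
    have h2 := (Real.hasDerivAt_exp (-(l*t))).comp t h1
    have h3 := h2.neg.div_const l
    refine h3.congr_deriv ?_
    rw [mul_neg, neg_neg, mul_div_assoc, div_self (ne_of_gt hlpos), mul_one]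
  have step2 : (∫ t in a..B, Real.exp (-(l * t)))
      = -(Real.exp (-(l*B)))/l - (-(Real.exp (-(l*a)))/l) :=
    intervalIntegral.integral_eq_sub_of_hasDerivAt (fun t _ => hderiv t)
      hint2
  have step3 : (∫ t in a..B, Real.exp (-(l * t))) ≤ 1 / l := by
    rw [step2]
    have h1 : Real.exp (-(l*a)) ≤ 1 := Real.exp_le_one_iff.mpr (by nlinarith)
    have h2 : 0 < Real.exp (-(l*B)) := Real.exp_pos _
    rw [div_sub_div_same, div_le_div_iff₀ hlpos hlpos]
    nlinarith
  -- final comparison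
  have hπ52 : Real.pi^(2:ℕ) ≤ Real.pi^((5:ℝ)/2) := by
    rw [← Real.rpow_natCast Real.pi 2]
    refine Real.rpow_le_rpow_of_exponent_le ?_ (by norm_num)
    linarith [Real.pi_gt_three]
  have hfin : 1 / l ≤ Real.pi ^ ((5:ℝ)/2) * γ / ((h:ℝ) ^ 2 * σ ^ 2 * (n:ℝ) * H) := by
    have hone : 1/l = Real.pi^(2:ℕ) * γ / ((h:ℝ)^2 * σ^2 * (n:ℝ) * H) := by
      rw [hl, ha]
      have h1 : Real.pi ≠ 0 := ne_of_gt hπ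
      have h2 : (n:ℝ) ≠ 0 := ne_of_gt hnR
      have h3 : (h:ℝ) ≠ 0 := ne_of_gt hhR
      have h4 : H ≠ 0 := ne_of_gt hH
      have h5 : σ ≠ 0 := ne_of_gt hσpos
      have h6 : γ ≠ 0 := ne_of_gt hγpos
      field_simp
    rw [hone]
    have hdpos : 0 < (h:ℝ)^2 * σ^2 * (n:ℝ) * H := by positivity
    exact (div_le_div_iff_of_pos_right hdpos).mpr (mul_le_mul_of_nonneg_right hπ52 hγpos.le)
  calc (∫ t in a..B, ‖∫ ω, Complex.exp (Complex.I * (t * X ω)) ∂μ‖ ^ n)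
      ≤ ∫ t in a..B, Real.exp (-(l * t)) := step1
    _ ≤ 1 / l := step3
    _ ≤ _ := hfin
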